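/- Let m ≥ 1, n ≥ 2, α ∈ (0,1)^n with ∑ αᵢ = 1. The dual cone of the generalized power cone P^α_{m,n} (under the Euclidean inner product on ℝ^{m+n}) equals { (z̄, z̃) ∈ ℝ^m × ℝⁿ : z̃ᵢ ≥ 0 for all i and ‖z̄‖ ≤ ∏ (z̃ᵢ/αᵢ)^{αᵢ} }. -/

import Mathlib

open Finset

noncomputable section

abbrev E (m n : ℕ) : Type := WithLp 2 (EuclideanSpace ℝ (Fin m) × EuclideanSpace ℝ (Fin n))

def PowCone (m n : ℕ) (α : Fin n → ℝ) : Set (E m n) :=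
  {x | (∀ i, 0 ≤ x.snd i) ∧ ‖x.fst‖ ≤ ∏ i, x.snd i ^ α i}

open RealInnerProductSpace in
lemma inner_E (m n : ℕ) (x y : E m n) :
    ⟪x, y⟫ = ⟪x.fst, y.fst⟫ + ∑ i, x.snd i * y.snd i := by
  rw [WithLp.prod_inner_apply]
  simp [PiLp.inner_apply, RCLike.inner_apply, conj_trivial, mul_comm]

/-- The dual cone of the generalized power cone. -/
theorem powCone_dual (m n : ℕ) (hm : 1 ≤ m) (hn : 2 ≤ n) (α : Fin n → ℝ)
    (hα : ∀ i, 0 < α i ∧ α i < 1) (hαsum : ∑ i, α i = 1) :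
    (ProperCone.innerDual (PowCone m n α) : Set (E m n)) =
      {z : E m n | (∀ i, 0 ≤ z.snd i) ∧ ‖z.fst‖ ≤ ∏ i, (z.snd i / α i) ^ α i} := by
  have hαpos : ∀ i, 0 < α i := fun i => (hα i).1
  ext z
  simp only [SetLike.mem_coe, ProperCone.mem_innerDual, Set.mem_setOf_eq]
  constructor
  · intro hz
    -- nonnegativity of the second block
    have hz2 : ∀ i, 0 ≤ z.snd i := by
      intro i
      have hmem : (WithLp.toLp 2 (0, EuclideanSpace.single i (1:ℝ)) : E m n) ∈ PowCone m n α := by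
        constructor
        · intro j
          simp [EuclideanSpace.single_apply]
          positivity
        · simp only [WithLp.toLp_fst, WithLp.toLp_snd, norm_zero]
          exact Finset.prod_nonneg fun j _ => Real.rpow_nonneg (by
            simp [EuclideanSpace.single_apply]; positivity) _
      have := hz hmem
      rw [inner_E] at this
      simpa [EuclideanSpace.single_apply] using this
    refine ⟨hz2, ?_⟩
    -- key inequality
    have key : ∀ w : Fin n → ℝ, (∀ i, 0 ≤ w i) →
        ‖z.fst‖ * ∏ i, w i ^ α i ≤ ∑ i, z.snd i * w i := by
      intro w hw
      have hP : (0:ℝ) ≤ ∏ i, w i ^ α i :=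
        Finset.prod_nonneg fun i _ => Real.rpow_nonneg (hw i) _
      rcases eq_or_ne z.fst 0 with h1 | h1
      · rw [h1, norm_zero, zero_mul]
        exact Finset.sum_nonneg fun i _ => mul_nonneg (hz2 i) (hw i)
      · have hz1 : (0:ℝ) < ‖z.fst‖ := norm_pos_iff.mpr h1
        set c : ℝ := (∏ i, w i ^ α i) / ‖z.fst‖ with hc
        have hc0 : 0 ≤ c := div_nonneg hP hz1.le
        have hmem : (WithLp.toLp 2 (-(c • z.fst), (WithLp.toLp 2 w : EuclideanSpace ℝ (Fin n))) : E m n) ∈ PowCone m n α := by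
          constructor
          · exact hw
          · simp only [WithLp.toLp_fst, WithLp.toLp_snd, PiLp.toLp_apply, norm_neg, norm_smul, Real.norm_eq_abs, abs_of_nonneg hc0]
            rw [hc, div_mul_cancel₀ _ hz1.ne']
        have := hz hmem
        rw [inner_E] at this
        simp only [WithLp.toLp_fst, WithLp.toLp_snd, PiLp.toLp_apply, inner_neg_left, real_inner_smul_left, real_inner_self_eq_norm_mul_norm] at this
        have heq : c * (‖z.fst‖ * ‖z.fst‖) = ‖z.fst‖ * ∏ i, w i ^ α i := by
          rw [hc]; field_simp
        have h2 : (∑ i, w i * z.snd i) = ∑ i, z.snd i * w i := by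
          exact Finset.sum_congr rfl fun i _ => mul_comm _ _
        rw [h2] at this
        linarith [this, heq.symm ▸ this]
    by_cases hall : ∀ i, 0 < z.snd i
    · -- all positive: choose w i = α i / z.snd i
      have hP : (0:ℝ) < ∏ i, (z.snd i / α i) ^ α i :=
        Finset.prod_pos fun i _ => Real.rpow_pos_of_pos (div_pos (hall i) (hαpos i)) _
      have := key (fun i => α i / z.snd i) (fun i => div_nonneg (hαpos i).le (hall i).le)
      have hsum : (∑ i, z.snd i * (α i / z.snd i)) = 1 := by
        rw [← hαsum]
        exact Finset.sum_congr rfl fun i _ => by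
          rw [mul_comm, div_mul_cancel₀ _ (hall i).ne']
      have hprod : (∏ i, (α i / z.snd i) ^ α i) = (∏ i, (z.snd i / α i) ^ α i)⁻¹ := by
        rw [← Finset.prod_inv_distrib]
        refine Finset.prod_congr rfl fun i _ => ?_
        rw [← Real.inv_rpow (div_nonneg (hall i).le (hαpos i).le), inv_div]
      rw [hsum, hprod] at this
      calc ‖z.fst‖ = ‖z.fst‖ * (∏ i, (z.snd i / α i) ^ α i)⁻¹ * (∏ i, (z.snd i / α i) ^ α i) := by
            field_simp
        _ ≤ 1 * (∏ i, (z.snd i / α i) ^ α i) := by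
            exact mul_le_mul_of_nonneg_right this hP.le
        _ = _ := one_mul _
    · -- some coordinate is zero: RHS is 0, show z.fst = 0
      push_neg at hall
      obtain ⟨j, hj⟩ := hall
      have hj0 : z.snd j = 0 := le_antisymm hj (hz2 j)
      have hRHS : (∏ i, (z.snd i / α i) ^ α i) = 0 := by
        apply Finset.prod_eq_zero (Finset.mem_univ j)
        rw [hj0, zero_div, Real.zero_rpow (hαpos j).ne']
      rw [hRHS]
      by_contra hlt
      push_neg at hlt
      have hz1 : (0:ℝ) < ‖z.fst‖ := hlt
      set C : ℝ := ∑ i, z.snd i with hC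
      have hC0 : 0 ≤ C := Finset.sum_nonneg fun i _ => hz2 i
      set t : ℝ := ((C + 1) / ‖z.fst‖) ^ (α j)⁻¹ with ht
      have hbase : (0:ℝ) ≤ (C + 1) / ‖z.fst‖ := div_nonneg (by linarith) hz1.le
      have ht0 : 0 ≤ t := Real.rpow_nonneg hbase _
      have hkey := key (fun i => if i = j then t else 1) (fun i => by
        by_cases h : i = j <;> simp [h, ht0])
      have hprod : (∏ i, (if i = j then t else 1) ^ α i) = (C + 1) / ‖z.fst‖ := by
        rw [Finset.prod_eq_single j (fun i _ hi => by simp [hi]) (by simp), if_pos rfl, ht,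
          ← Real.rpow_mul hbase, inv_mul_cancel₀ (hαpos j).ne', Real.rpow_one]
      have hsum : (∑ i, z.snd i * (if i = j then t else 1)) = C := by
        rw [hC]
        refine Finset.sum_congr rfl fun i _ => ?_
        by_cases h : i = j
        · rw [h, hj0]; ring
        · simp [h]
      rw [hprod, hsum, mul_div_cancel₀ _ hz1.ne'] at hkey
      linarith
  · rintro ⟨hz2, hz1⟩ x hx
    obtain ⟨hx2, hx1⟩ := hx
    rw [inner_E]
    have h1 : -(‖x.fst‖ * ‖z.fst‖) ≤ (inner ℝ x.fst z.fst : ℝ) := by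
      have h := abs_real_inner_le_norm x.fst z.fst
      have h' := neg_abs_le (inner ℝ x.fst z.fst : ℝ)
      linarith
    have h2 : ‖x.fst‖ * ‖z.fst‖ ≤ (∏ i, x.snd i ^ α i) * ∏ i, (z.snd i / α i) ^ α i :=
      mul_le_mul hx1 hz1 (norm_nonneg _)
        (Finset.prod_nonneg fun i _ => Real.rpow_nonneg (hx2 i) _)
    have h3 : (∏ i, x.snd i ^ α i) * ∏ i, (z.snd i / α i) ^ α i
        = ∏ i, (x.snd i * (z.snd i / α i)) ^ α i := by
      rw [← Finset.prod_mul_distrib]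
      exact Finset.prod_congr rfl fun i _ =>
        (Real.mul_rpow (hx2 i) (div_nonneg (hz2 i) (hαpos i).le)).symm
    have h4 : (∏ i, (x.snd i * (z.snd i / α i)) ^ α i) ≤ ∑ i, α i * (x.snd i * (z.snd i / α i)) :=
      Real.geom_mean_le_arith_mean_weighted _ _ _ (fun i _ => (hαpos i).le)
        hαsum (fun i _ => mul_nonneg (hx2 i) (div_nonneg (hz2 i) (hαpos i).le))
    have h5 : (∑ i, α i * (x.snd i * (z.snd i / α i))) = ∑ i, x.snd i * z.snd i := by
      refine Finset.sum_congr rfl fun i _ => ?_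
      field_simp [(hαpos i).ne']
    linarith [h1, h2, h3 ▸ h2, h4, h5 ▸ h4]
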